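/- In the linear cell-kill special case (β = 0, toxicity measured by physical dose), the problem min ∑_{t=0}^{N} w_t exp(−ξα·∑_{k=1}^{t} d_k) subject to ∑_{t=1}^{N} d_t ≤ D_max and 0 ≤ d_t ≤ d_max (with 0 < D_max < N·d_max, α > 0, ξ > 0, w_t > 0) is solved by the front-loaded schedule d*_t = d_max for t = 1,…,k, d*_{k+1} = D_max − k·d_max, d*_t = 0 for t ≥ k+2, where k = ⌊D_max/d_max⌋. -/
import Mathlib


open Finset Real

lemma frontload_partial_sum (dmax Dmax : ℝ) (hdmax : 0 < dmax) (hD0 : 0 < Dmax)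
    (t : ℕ) :
    ∑ s ∈ Finset.range t, (if s < ⌊Dmax / dmax⌋₊ then dmax
        else if s = ⌊Dmax / dmax⌋₊ then Dmax - ⌊Dmax / dmax⌋₊ * dmax
        else 0) = min ((t : ℝ) * dmax) Dmax := by
  set k := ⌊Dmax / dmax⌋₊ with hk
  have hkd : (k : ℝ) * dmax ≤ Dmax := by
    have h1 : (k : ℝ) ≤ Dmax / dmax := Nat.floor_le (by positivity)
    calc (k : ℝ) * dmax ≤ (Dmax / dmax) * dmax :=
          mul_le_mul_of_nonneg_right h1 hdmax.le
      _ = Dmax := by field_simp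
  have hkd' : Dmax < ((k : ℝ) + 1) * dmax := by
    have h1 : Dmax / dmax < (k : ℝ) + 1 := Nat.lt_floor_add_one _
    have := mul_lt_mul_of_pos_right h1 hdmax
    rwa [div_mul_cancel₀ _ hdmax.ne'] at this
  induction t with
  | zero => simp [hD0.le]
  | succ t ih =>
    rw [Finset.sum_range_succ, ih]
    rcases lt_trichotomy t k with h | h | h
    · have h1 : (t : ℝ) * dmax ≤ Dmax := by
        calc (t : ℝ) * dmax ≤ (k : ℝ) * dmax :=
              mul_le_mul_of_nonneg_right (by exact_mod_cast h.le) hdmax.le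
          _ ≤ Dmax := hkd
      have h2 : ((t : ℝ) + 1) * dmax ≤ Dmax := by
        have ht : (t : ℝ) + 1 ≤ (k : ℝ) := by exact_mod_cast h
        calc ((t : ℝ) + 1) * dmax ≤ (k : ℝ) * dmax :=
              mul_le_mul_of_nonneg_right ht hdmax.le
          _ ≤ Dmax := hkd
      rw [if_pos h, min_eq_left h1, min_eq_left (by push_cast; linarith)]
      push_cast; ring
    · subst h
      rw [if_neg (lt_irrefl _), if_pos rfl, min_eq_left hkd,
        min_eq_right (by push_cast; linarith)]
      ring
    · have ht1 : (k : ℝ) + 1 ≤ (t : ℝ) := by exact_mod_cast h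
      have h1 : Dmax ≤ (t : ℝ) * dmax := by nlinarith
      have h2 : Dmax ≤ ((t : ℝ) + 1) * dmax := by nlinarith
      rw [if_neg (by omega), if_neg (by omega), min_eq_right h1,
        min_eq_right (by push_cast; linarith)]
      ring

/-- Proposition of Section 3: with linear cell-kill and physical-dose
constraints, the front-loaded hypo-fractionated schedule is optimal. -/
theorem front_loaded_optimal_linear_cell_kill
    (N : ℕ) (w : ℕ → ℝ) (hw : ∀ t, t ≤ N → 0 < w t)
    (α ξ dmax Dmax : ℝ) (hα : 0 < α) (hξ : 0 < ξ)
    (hdmax : 0 < dmax) (hD0 : 0 < Dmax) (hDN : Dmax < N * dmax) :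
    ((∀ s, s < N → 0 ≤ (fun s => if s < ⌊Dmax / dmax⌋₊ then dmax
        else if s = ⌊Dmax / dmax⌋₊ then Dmax - ⌊Dmax / dmax⌋₊ * dmax
        else 0) s ∧
      (fun s => if s < ⌊Dmax / dmax⌋₊ then dmax
        else if s = ⌊Dmax / dmax⌋₊ then Dmax - ⌊Dmax / dmax⌋₊ * dmax
        else 0) s ≤ dmax) ∧
      ∑ s ∈ Finset.range N,
        (fun s => if s < ⌊Dmax / dmax⌋₊ then dmax
          else if s = ⌊Dmax / dmax⌋₊ then Dmax - ⌊Dmax / dmax⌋₊ * dmax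
          else 0) s ≤ Dmax) ∧
    ∀ d : ℕ → ℝ,
      (∀ s, s < N → 0 ≤ d s ∧ d s ≤ dmax) →
      (∑ s ∈ Finset.range N, d s ≤ Dmax) →
      ∑ t ∈ Finset.range (N + 1), w t *
          Real.exp (-(ξ * α) * ∑ k ∈ Finset.range t,
            (fun s => if s < ⌊Dmax / dmax⌋₊ then dmax
              else if s = ⌊Dmax / dmax⌋₊ then Dmax - ⌊Dmax / dmax⌋₊ * dmax
              else 0) k) ≤
        ∑ t ∈ Finset.range (N + 1), w t *
          Real.exp (-(ξ * α) * ∑ k ∈ Finset.range t, d k) := by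
  set k := ⌊Dmax / dmax⌋₊ with hk
  have hkd : (k : ℝ) * dmax ≤ Dmax := by
    have h1 : (k : ℝ) ≤ Dmax / dmax := Nat.floor_le (by positivity)
    calc (k : ℝ) * dmax ≤ (Dmax / dmax) * dmax :=
          mul_le_mul_of_nonneg_right h1 hdmax.le
      _ = Dmax := by field_simp
  have hkd' : Dmax < ((k : ℝ) + 1) * dmax := by
    have h1 : Dmax / dmax < (k : ℝ) + 1 := Nat.lt_floor_add_one _
    have := mul_lt_mul_of_pos_right h1 hdmax
    rwa [div_mul_cancel₀ _ hdmax.ne'] at this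
  refine ⟨⟨fun s _ => ?_, ?_⟩, ?_⟩
  · simp only
    split_ifs with h1 h2
    · exact ⟨hdmax.le, le_refl _⟩
    · constructor <;> nlinarith
    · exact ⟨le_refl _, hdmax.le⟩
  · rw [frontload_partial_sum dmax Dmax hdmax hD0 N]
    exact min_le_right _ _
  · intro d hd hsum
    apply Finset.sum_le_sum
    intro t ht
    rw [Finset.mem_range, Nat.lt_succ_iff] at ht
    have hwt := hw t ht
    apply mul_le_mul_of_nonneg_left _ hwt.le
    apply Real.exp_le_exp.mpr
    have hc : 0 < ξ * α := mul_pos hξ hα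
    rw [neg_mul, neg_mul, neg_le_neg_iff]
    apply mul_le_mul_of_nonneg_left _ hc.le
    rw [frontload_partial_sum dmax Dmax hdmax hD0 t]
    rcases le_total ((t : ℝ) * dmax) Dmax with h | h
    · rw [min_eq_left h]
      calc ∑ s ∈ Finset.range t, d s ≤ ∑ s ∈ Finset.range t, dmax := by
            apply Finset.sum_le_sum
            intro s hs
            exact (hd s (lt_of_lt_of_le (Finset.mem_range.mp hs) ht)).2
        _ = (t : ℝ) * dmax := by simp [mul_comm]
    · rw [min_eq_right h]
      calc ∑ s ∈ Finset.range t, d s ≤ ∑ s ∈ Finset.range N, d s := by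
            apply Finset.sum_le_sum_of_subset_of_nonneg
              (Finset.range_subset_range.mpr ht)
            intro s hs _
            exact (hd s (Finset.mem_range.mp hs)).1
        _ ≤ Dmax := hsum
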